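/- Consider n agents with Lagrangian dynamics M_i(q_i)q̈_i + C_i(q_i, q̇_i)q̇_i = τ_i, q_i(t) ∈ ℝ^m, under the control law τ_i = −k q̇_i − (q_i − P_{X_i}(q_i)) − Σ_{j∈N_i} a_{ij}(q_i − q_j), with k > 0, over a fixed undirected communication graph with symmetric weights a_{ij} = a_{ji} ≥ 0, where X_1, …, X_n are nonempty closed convex sets. Define V(t) = (1/2) Σ_{i=1}^n q̇_i(t)ᵀ M_i(q_i(t)) q̇_i(t) + (1/4) Σ_{i=1}^n Σ_{j∈N_i} a_{ij} ‖q_i(t) − q_j(t)‖² + (1/2) Σ_{i=1}^n ‖q_i(t) − P_{X_i}(q_i(t))‖². Then along every C² solution, V is differentiable with dV/dt = −k Σ_{i=1}^n ‖q̇_i(t)‖² ≤ 0. -/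

import Mathlib

open scoped RealInnerProductSpace BigOperators

section AuxProj

variable {E : Type*} [NormedAddCommGroup E] [InnerProductSpace ℝ E]

lemma aux_var_ineq (S : Set E) (hS : Convex ℝ S) (P : E → E)
    (hmem : ∀ x, P x ∈ S) (hproj : ∀ x, ∀ y ∈ S, ‖x - P x‖ ≤ ‖x - y‖)
    (x : E) : ∀ y ∈ S, ⟪x - P x, y - P x⟫ ≤ 0 := by
  intro y hy
  by_contra hcon
  push_neg at hcon
  set c := ⟪x - P x, y - P x⟫ with hc
  set d := ‖y - P x‖ ^ 2 with hd
  have hd0 : 0 ≤ d := by positivity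
  set t : ℝ := min 1 (c / (d + 1)) with ht
  have ht0 : 0 < t := lt_min one_pos (div_pos hcon (by linarith))
  have ht1 : t ≤ 1 := min_le_left _ _
  have htd : t * (d + 1) ≤ c := by
    have := min_le_right 1 (c / (d + 1))
    calc t * (d + 1) ≤ (c / (d + 1)) * (d + 1) := by nlinarith
    _ = c := by field_simp
  have hz : P x + t • (y - P x) ∈ S := by
    have h2 := hS (hmem x) hy (by linarith : (0:ℝ) ≤ 1 - t) ht0.le (by ring)
    convert h2 using 1
    module
  have hle := hproj x _ hz
  have hsq : ‖x - P x‖ ^ 2 ≤ ‖x - (P x + t • (y - P x))‖ ^ 2 := by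
    have h0 : (0:ℝ) ≤ ‖x - (P x + t • (y - P x))‖ := norm_nonneg _
    nlinarith [norm_nonneg (x - P x)]
  have hexp : ‖x - (P x + t • (y - P x))‖ ^ 2
      = ‖x - P x‖ ^ 2 - 2 * (t * c) + t ^ 2 * d := by
    have he : x - (P x + t • (y - P x)) = (x - P x) - t • (y - P x) := by
      abel
    rw [he, norm_sub_sq_real, real_inner_smul_right, norm_smul, mul_pow]
    simp only [Real.norm_eq_abs, sq_abs, ← hc, ← hd]
  nlinarith

lemma aux_nonexp (S : Set E) (hS : Convex ℝ S) (P : E → E)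
    (hmem : ∀ x, P x ∈ S) (hproj : ∀ x, ∀ y ∈ S, ‖x - P x‖ ≤ ‖x - y‖)
    (x y : E) : ‖P x - P y‖ ≤ ‖x - y‖ := by
  have h1 := aux_var_ineq S hS P hmem hproj x (P y) (hmem y)
  have h2 := aux_var_ineq S hS P hmem hproj y (P x) (hmem x)
  have hkey : ‖P x - P y‖ ^ 2 ≤ ⟪x - y, P x - P y⟫ := by
    have e1 : ⟪x - y, P x - P y⟫
        = -⟪x - P x, P y - P x⟫ + ⟪P x - P y, P x - P y⟫ - ⟪y - P y, P x - P y⟫ := by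
      rw [show x - y = (x - P x) + (P x - P y) - (y - P y) by abel, inner_sub_left,
        inner_add_left, show P y - P x = -(P x - P y) by abel, inner_neg_right]
      ring
    rw [← real_inner_self_eq_norm_sq]
    linarith
  have hcs := real_inner_le_norm (x - y) (P x - P y)
  rcases eq_or_lt_of_le (norm_nonneg (P x - P y)) with h | h
  · rw [← h]; exact norm_nonneg _
  · nlinarith

lemma aux_grad (S : Set E) (hS : Convex ℝ S) (P : E → E)
    (hmem : ∀ x, P x ∈ S) (hproj : ∀ x, ∀ y ∈ S, ‖x - P x‖ ≤ ‖x - y‖)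
    (x : E) :
    HasFDerivAt (fun y => ‖y - P y‖ ^ 2) ((2:ℝ) • (innerSL ℝ (x - P x))) x := by
  rw [hasFDerivAt_iff_isLittleO_nhds_zero]
  have key : ∀ h : E,
      |‖x + h - P (x + h)‖ ^ 2 - ‖x - P x‖ ^ 2 - 2 * ⟪x - P x, h⟫| ≤ 3 * ‖h‖ ^ 2 := by
    intro h
    have hup : ‖x + h - P (x + h)‖ ^ 2 ≤ ‖x - P x‖ ^ 2 + 2 * ⟪x - P x, h⟫ + ‖h‖ ^ 2 := by
      have h1 : ‖x + h - P (x + h)‖ ≤ ‖x + h - P x‖ := hproj (x + h) _ (hmem x)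
      have h2 : ‖x + h - P x‖ ^ 2 = ‖x - P x‖ ^ 2 + 2 * ⟪x - P x, h⟫ + ‖h‖ ^ 2 := by
        rw [show x + h - P x = (x - P x) + h by abel, norm_add_sq_real]
      nlinarith [norm_nonneg (x + h - P (x + h)), norm_nonneg (x + h - P x)]
    have hlo : ‖x - P x‖ ^ 2 + 2 * ⟪x - P x, h⟫ - 2 * ‖h‖ ^ 2 ≤ ‖x + h - P (x + h)‖ ^ 2 := by
      have h1 : ‖x - P x‖ ≤ ‖x - P (x + h)‖ := hproj x _ (hmem (x + h))
      have h2 : ‖x + h - P (x + h)‖ ^ 2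
          = ‖x - P (x + h)‖ ^ 2 + 2 * ⟪x - P (x + h), h⟫ + ‖h‖ ^ 2 := by
        rw [show x + h - P (x + h) = (x - P (x + h)) + h by abel, norm_add_sq_real]
      have h3 : ⟪x - P (x + h), h⟫ = ⟪x - P x, h⟫ - ⟪P (x + h) - P x, h⟫ := by
        rw [← inner_sub_left]; congr 1; abel
      have h4 : ‖P (x + h) - P x‖ ≤ ‖h‖ := by
        have := aux_nonexp S hS P hmem hproj (x + h) x
        simpa using this
      have h5 : ⟪P (x + h) - P x, h⟫ ≤ ‖h‖ ^ 2 := by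
        have := real_inner_le_norm (P (x + h) - P x) h
        nlinarith [norm_nonneg h]
      nlinarith [norm_nonneg (x - P x), norm_nonneg (x - P (x + h))]
    rw [abs_le]
    constructor <;> nlinarith
  rw [Asymptotics.isLittleO_iff]
  intro c hc
  have : ∀ᶠ h : E in nhds 0, ‖h‖ ≤ c / 3 := by
    have : Metric.closedBall (0:E) (c/3) ∈ nhds (0:E) :=
      Metric.closedBall_mem_nhds 0 (by positivity)
    filter_upwards [this] with h hh
    simpa [Metric.mem_closedBall, dist_eq_norm] using hh
  filter_upwards [this] with h hh
  have := key h
  have h2 : ((2:ℝ) • (innerSL ℝ (x - P x))) h = 2 * ⟪x - P x, h⟫ := by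
    simp [smul_eq_mul, inner_sub_left]
  rw [h2, Real.norm_eq_abs]
  calc |‖x + h - P (x + h)‖ ^ 2 - ‖x - P x‖ ^ 2 - 2 * ⟪x - P x, h⟫| ≤ 3 * ‖h‖ ^ 2 := key h
    _ ≤ c * ‖h‖ := by nlinarith [norm_nonneg h]

end AuxProj


/-- Along every C² solution of the Lagrangian closed loop with
control `τᵢ = -k q̇ᵢ - (qᵢ - P_{Xᵢ}(qᵢ)) - ∑ⱼ aᵢⱼ(qᵢ - qⱼ)`, the Lyapunov function
`V = (1/2)∑ᵢ q̇ᵢᵀMᵢq̇ᵢ + (1/4)∑ᵢ∑ⱼ aᵢⱼ‖qᵢ - qⱼ‖² + (1/2)∑ᵢ ‖qᵢ - P_{Xᵢ}(qᵢ)‖²`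
is differentiable with `dV/dt = -k ∑ᵢ ‖q̇ᵢ‖² ≤ 0`. -/
theorem statement15
    (m n : ℕ)
    (X : Fin n → Set (EuclideanSpace ℝ (Fin m)))
    (hXclosed : ∀ i, IsClosed (X i))
    (hXconvex : ∀ i, Convex ℝ (X i))
    (hXne : ∀ i, (X i).Nonempty)
    (P : Fin n → EuclideanSpace ℝ (Fin m) → EuclideanSpace ℝ (Fin m))
    (hPmem : ∀ i x, P i x ∈ X i)
    (hPproj : ∀ i x, ∀ y ∈ X i, ‖x - P i x‖ ≤ ‖x - y‖)
    (a : Fin n → Fin n → ℝ)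
    (ha_symm : ∀ i j, a i j = a j i)
    (ha_nonneg : ∀ i j, 0 ≤ a i j)
    (ha_diag : ∀ i, a i i = 0)
    (k : ℝ) (hk : 0 < k)
    (M : Fin n → EuclideanSpace ℝ (Fin m) →
      EuclideanSpace ℝ (Fin m) →L[ℝ] EuclideanSpace ℝ (Fin m))
    (Cc : Fin n → EuclideanSpace ℝ (Fin m) → EuclideanSpace ℝ (Fin m) →
      EuclideanSpace ℝ (Fin m) →L[ℝ] EuclideanSpace ℝ (Fin m))
    (hMsymm : ∀ i x v w, ⟪M i x v, w⟫ = ⟪v, M i x w⟫)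
    (hMpos : ∀ i x v, v ≠ 0 → 0 < ⟪M i x v, v⟫)
    (hMcont : ∀ i, Continuous (M i))
    (hCcont : ∀ i, Continuous fun p :
      EuclideanSpace ℝ (Fin m) × EuclideanSpace ℝ (Fin m) => Cc i p.1 p.2)
    (q : Fin n → ℝ → EuclideanSpace ℝ (Fin m))
    (hq : ∀ i, ContDiff ℝ 2 (q i))
    (hMdiff : ∀ i, Differentiable ℝ fun s => M i (q i s))
    (hskew : ∀ i t v w,
      ⟪(deriv (fun s => M i (q i s)) t - (2 : ℝ) • Cc i (q i t) (deriv (q i) t)) v, w⟫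
        = -⟪(deriv (fun s => M i (q i s)) t - (2 : ℝ) • Cc i (q i t) (deriv (q i) t)) w, v⟫)
    (hdyn : ∀ i t,
      M i (q i t) (deriv (deriv (q i)) t) + Cc i (q i t) (deriv (q i) t) (deriv (q i) t)
        = -k • deriv (q i) t - (q i t - P i (q i t)) - ∑ j, a i j • (q i t - q j t)) :
    ∀ t : ℝ,
      HasDerivAt (fun s =>
          (1 / 2) * ∑ i, ⟪M i (q i s) (deriv (q i) s), deriv (q i) s⟫
          + (1 / 4) * ∑ i, ∑ j, a i j * ‖q i s - q j s‖ ^ 2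
          + (1 / 2) * ∑ i, ‖q i s - P i (q i s)‖ ^ 2)
        (-k * ∑ i, ‖deriv (q i) t‖ ^ 2) t ∧
      -k * ∑ i, ‖deriv (q i) t‖ ^ 2 ≤ 0 := by
  intro t
  -- basic differentiability facts
  have hq1 : ∀ i, ContDiff ℝ 1 (deriv (q i)) := by
    intro i
    have h2 : ContDiff ℝ ((1 : ℕ) + 1) (q i) := by
      exact_mod_cast hq i
    exact (contDiff_succ_iff_deriv.mp h2).2.2
  have hqd : ∀ i, HasDerivAt (q i) (deriv (q i) t) t := fun i =>
    (((hq i).differentiable (by norm_num)) t).hasDerivAt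
  have hvd : ∀ i, HasDerivAt (deriv (q i)) (deriv (deriv (q i)) t) t := fun i =>
    (((hq1 i).differentiable one_ne_zero) t).hasDerivAt
  have hMd : ∀ i, HasDerivAt (fun s => M i (q i s)) (deriv (fun s => M i (q i s)) t) t :=
    fun i => ((hMdiff i) t).hasDerivAt
  -- Term 1 : kinetic energy
  have h1 : ∀ i, HasDerivAt (fun s => ⟪M i (q i s) (deriv (q i) s), deriv (q i) s⟫)
      (2 * (-(k * ‖deriv (q i) t‖ ^ 2) - ⟪q i t - P i (q i t), deriv (q i) t⟫
        - ∑ j, a i j * ⟪q i t - q j t, deriv (q i) t⟫)) t := by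
    intro i
    have hfd : HasDerivAt (fun s => M i (q i s) (deriv (q i) s))
        ((deriv (fun s => M i (q i s)) t) (deriv (q i) t)
          + M i (q i t) (deriv (deriv (q i)) t)) t :=
      (hMd i).clm_apply (hvd i)
    have hraw := HasDerivAt.inner ℝ hfd (hvd i)
    refine hraw.congr_deriv ?_
    -- algebra on the derivative value
    set Q := q i t
    set V := deriv (q i) t
    set A := deriv (deriv (q i)) t
    set Md := deriv (fun s => M i (q i s)) t
    have hMA : M i Q A = (-k • V - (Q - P i Q) - ∑ j, a i j • (Q - q j t))
        - Cc i Q V V := by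
      rw [eq_sub_iff_add_eq]
      exact hdyn i t
    have hMdV : ⟪Md V, V⟫ = 2 * ⟪Cc i Q V V, V⟫ := by
      have h := hskew i t V V
      simp only [ContinuousLinearMap.sub_apply, ContinuousLinearMap.smul_apply,
        inner_sub_left, real_inner_smul_left] at h
      linarith
    have hinnerMA : ⟪M i Q A, V⟫ = -(k * ‖V‖ ^ 2) - ⟪Q - P i Q, V⟫
        - (∑ j, a i j * ⟪Q - q j t, V⟫) - ⟪Cc i Q V V, V⟫ := by
      rw [hMA]
      simp only [inner_sub_left, sum_inner, real_inner_smul_left,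
        real_inner_self_eq_norm_sq, neg_smul, inner_neg_left]
      try ring
    have hsymV : ⟪M i Q V, A⟫ = ⟪M i Q A, V⟫ := by
      rw [hMsymm]; exact real_inner_comm _ _
    rw [inner_add_left, hsymV, hinnerMA, hMdV]
    ring
  -- Term 2 : graph coupling
  have h2 : ∀ i j, HasDerivAt (fun s => a i j * ‖q i s - q j s‖ ^ 2)
      (a i j * (2 * ⟪q i t - q j t, deriv (q i) t - deriv (q j) t⟫)) t := by
    intro i j
    have hsub : HasDerivAt (fun s => q i s - q j s) (deriv (q i) t - deriv (q j) t) t :=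
      (hqd i).sub (hqd j)
    have heq : (fun s => a i j * ‖q i s - q j s‖ ^ 2)
        = fun s => a i j * ⟪q i s - q j s, q i s - q j s⟫ := by
      funext s; rw [real_inner_self_eq_norm_sq]
    rw [heq]
    have := (HasDerivAt.inner ℝ hsub hsub).const_mul (a i j)
    refine this.congr_deriv ?_
    rw [real_inner_comm (deriv (q i) t - deriv (q j) t) (q i t - q j t)]
    ring
  -- Term 3 : projection distance
  have h3 : ∀ i, HasDerivAt (fun s => ‖q i s - P i (q i s)‖ ^ 2)
      (2 * ⟪q i t - P i (q i t), deriv (q i) t⟫) t := by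
    intro i
    have hgrad := aux_grad (X i) (hXconvex i) (P i) (hPmem i) (hPproj i) (q i t)
    exact hgrad.comp_hasDerivAt t (hqd i)
  -- assemble
  have hsum1 := (HasDerivAt.sum (fun i (_ : i ∈ Finset.univ) => h1 i)).const_mul
    ((1:ℝ) / 2)
  have hsum2 := (HasDerivAt.sum (fun i (_ : i ∈ Finset.univ) =>
    HasDerivAt.sum (fun j (_ : j ∈ Finset.univ) => h2 i j))).const_mul ((1:ℝ) / 4)
  have hsum3 := (HasDerivAt.sum (fun i (_ : i ∈ Finset.univ) => h3 i)).const_mul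
    ((1:ℝ) / 2)
  have htot := (hsum1.add hsum2).add hsum3
  constructor
  · refine (htot.congr_deriv ?_).congr_of_eventuallyEq
      (Filter.Eventually.of_forall fun s => by simp only [Pi.add_apply, Finset.sum_apply])
    -- scalar identity
    set Np := ∑ i, ‖deriv (q i) t‖ ^ 2 with hNp
    set Y := ∑ i, ⟪q i t - P i (q i t), deriv (q i) t⟫ with hY
    set Xs := ∑ i, ∑ j, a i j * ⟪q i t - q j t, deriv (q i) t⟫ with hXs
    have sum_two_mul : ∀ (f : Fin n → ℝ), (∑ i, 2 * f i) = 2 * ∑ i, f i := fun f =>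
      (Finset.mul_sum _ _ _).symm
    have hswap : ∑ i, ∑ j, a i j * ⟪q i t - q j t, deriv (q j) t⟫ = -Xs := by
      rw [hXs, Finset.sum_comm, ← Finset.sum_neg_distrib]
      refine Finset.sum_congr rfl fun i _ => ?_
      rw [← Finset.sum_neg_distrib]
      refine Finset.sum_congr rfl fun j _ => ?_
      rw [ha_symm j i, show q j t - q i t = -(q i t - q j t) by abel, inner_neg_left]
      ring
    have e1 : (∑ i, 2 * (-(k * ‖deriv (q i) t‖ ^ 2) - ⟪q i t - P i (q i t), deriv (q i) t⟫
          - ∑ j, a i j * ⟪q i t - q j t, deriv (q i) t⟫))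
        = 2 * (-(k * Np) - Y - Xs) := by
      have hcong : ∀ i ∈ Finset.univ, 2 * (-(k * ‖deriv (q i) t‖ ^ 2)
            - ⟪q i t - P i (q i t), deriv (q i) t⟫
            - ∑ j, a i j * ⟪q i t - q j t, deriv (q i) t⟫)
          = -(k * ‖deriv (q i) t‖ ^ 2) * 2 - ⟪q i t - P i (q i t), deriv (q i) t⟫ * 2
            - (∑ j, a i j * ⟪q i t - q j t, deriv (q i) t⟫) * 2 := fun i _ => by ring
      rw [Finset.sum_congr rfl hcong, Finset.sum_sub_distrib, Finset.sum_sub_distrib,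
        ← Finset.sum_mul, ← Finset.sum_mul, ← Finset.sum_mul, Finset.sum_neg_distrib,
        ← Finset.mul_sum, ← hNp, ← hY, ← hXs]
      ring
    have e3 : (∑ i, 2 * ⟪q i t - P i (q i t), deriv (q i) t⟫) = 2 * Y := sum_two_mul _
    have e2 : (∑ i, ∑ j, a i j * (2 * ⟪q i t - q j t, deriv (q i) t - deriv (q j) t⟫))
        = 4 * Xs := by
      have expand : ∀ i ∈ Finset.univ, ∀ j ∈ Finset.univ,
          a i j * (2 * ⟪q i t - q j t, deriv (q i) t - deriv (q j) t⟫)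
          = 2 * (a i j * ⟪q i t - q j t, deriv (q i) t⟫)
            - 2 * (a i j * ⟪q i t - q j t, deriv (q j) t⟫) := by
        intro i _ j _; rw [inner_sub_right]; ring
      calc (∑ i, ∑ j, a i j * (2 * ⟪q i t - q j t, deriv (q i) t - deriv (q j) t⟫))
          = ∑ i, ∑ j, (2 * (a i j * ⟪q i t - q j t, deriv (q i) t⟫)
            - 2 * (a i j * ⟪q i t - q j t, deriv (q j) t⟫)) :=
            Finset.sum_congr rfl fun i hi => Finset.sum_congr rfl fun j hj => expand i hi j hj
        _ = 2 * Xs - 2 * (∑ i, ∑ j, a i j * ⟪q i t - q j t, deriv (q j) t⟫) := by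
            simp only [Finset.sum_sub_distrib, ← Finset.mul_sum, hXs]
        _ = 4 * Xs := by rw [hswap]; ring
    rw [e1, e2, e3]
    ring
  · have hS : 0 ≤ ∑ i, ‖deriv (q i) t‖ ^ 2 :=
      Finset.sum_nonneg fun i _ => by positivity
    nlinarith
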